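/- Let n ∈ 𝒪_F be primary (a fixed generator ≡ 1 mod 3) and coprime to 3, and let σ be the nontrivial automorphism of F over K = ℚ(i). Then the cubic residue symbol (n^σ/n)₃ equals 1. -/

import Mathlib

open NumberField

/-- A ring automorphism of `𝒪_F`, `F = ℚ(ζ₁₂)`, fixing a primitive 12th root of
unity fixes everything. -/
lemma fix_of_fix_zeta (ζ : 𝓞 (CyclotomicField 12 ℚ)) (hζ : IsPrimitiveRoot ζ 12)
    (σ : 𝓞 (CyclotomicField 12 ℚ) ≃+* 𝓞 (CyclotomicField 12 ℚ)) (h : σ ζ = ζ)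
    (x : 𝓞 (CyclotomicField 12 ℚ)) : σ x = x := by
  set F := CyclotomicField 12 ℚ
  haveI : IsCyclotomicExtension ({12} : Set ℕ) ℚ F :=
    CyclotomicField.isCyclotomicExtension 12 ℚ
  haveI : NumberField F := IsCyclotomicExtension.numberField ({12} : Set ℕ) ℚ F
  have hinj : Function.Injective (algebraMap (𝓞 F) F) := IsFractionRing.injective _ _
  set g : 𝓞 F →+* F := (algebraMap (𝓞 F) F).comp (σ : 𝓞 F →+* 𝓞 F) with hgdef
  have hg : Function.Injective g := hinj.comp σ.injective
  set τ : F →+* F := IsFractionRing.lift hg with hτdef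
  have hτ : ∀ y : 𝓞 F, τ (algebraMap (𝓞 F) F y) = algebraMap (𝓞 F) F (σ y) := fun y => by
    rw [hτdef, IsFractionRing.lift_algebraMap]; rfl
  have hζ' : IsPrimitiveRoot (algebraMap (𝓞 F) F ζ) 12 := hζ.map_of_injective hinj
  have key : ∀ z : F, τ z = z := by
    intro z
    have hz := IsCyclotomicExtension.adjoin_roots (S := ({12} : Set ℕ)) (A := ℚ) (B := F) z
    refine Algebra.adjoin_induction (fun b hb => ?_) (fun r => ?_)
      (fun a b _ _ ha hb => by rw [map_add, ha, hb])
      (fun a b _ _ ha hb => by rw [map_mul, ha, hb]) hz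
    · obtain ⟨m, hm, -, hb⟩ := hb
      have hm' : (m : ℕ) = 12 := by
        have : m = 12 := by simpa using hm
        simp [this]
      rw [hm'] at hb
      obtain ⟨i, _, hi⟩ := hζ'.eq_pow_of_pow_eq_one hb
      rw [← hi, map_pow, hτ, h]
    · rw [eq_ratCast (algebraMap ℚ F) r, map_ratCast]
  have := key (algebraMap (𝓞 F) F x)
  rw [hτ] at this
  exact hinj this

/-- Let `n ∈ 𝒪_F`, `F = ℚ(ζ₁₂)`, be primary (`n ≡ 1 mod 3`) and coprime to 3, and
let `σ` be the nontrivial automorphism of `F` over `K = ℚ(i)` (a ring automorphism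
of `𝒪_F` fixing `i = ζ₁₂³` and different from the identity). If `J = (·/·)₃` is the
cubic residue symbol — μ₃-valued, compatible with `σ`, and satisfying cubic
reciprocity — then `(n^σ/n)₃ = 1`. -/
theorem stmt14 (ζ : 𝓞 (CyclotomicField 12 ℚ)) (hζ : IsPrimitiveRoot ζ 12)
    (σ : 𝓞 (CyclotomicField 12 ℚ) ≃+* 𝓞 (CyclotomicField 12 ℚ))
    (hσi : σ (ζ ^ 3) = ζ ^ 3) (hσne : σ ≠ RingEquiv.refl _)
    (J : 𝓞 (CyclotomicField 12 ℚ) → 𝓞 (CyclotomicField 12 ℚ) → 𝓞 (CyclotomicField 12 ℚ))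
    (hcube : ∀ m k, (J m k) ^ 3 = 1)
    (hconj : ∀ m k, σ (J m k) = J (σ m) (σ k))
    (hrec : ∀ m k, (3 : 𝓞 (CyclotomicField 12 ℚ)) ∣ m - 1 →
      (3 : 𝓞 (CyclotomicField 12 ℚ)) ∣ k - 1 → J m k = J k m)
    (n : 𝓞 (CyclotomicField 12 ℚ)) (hn : (3 : 𝓞 (CyclotomicField 12 ℚ)) ∣ n - 1)
    (hn3 : IsCoprime n 3) :
    J (σ n) n = 1 := by
  have h12 : ζ ^ 12 = 1 := hζ.pow_eq_one
  -- classify σ ζ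
  have hσ12 : (σ ζ) ^ 12 = 1 := by rw [← map_pow, h12, map_one]
  obtain ⟨i, hi12, hi⟩ := hζ.eq_pow_of_pow_eq_one hσ12
  have h9 : ζ ^ (i * 3 + 9) = 1 := by
    have h1 : σ (ζ ^ 3) = ζ ^ (i * 3) := by rw [map_pow, ← hi, ← pow_mul]
    rw [hσi] at h1
    rw [pow_add, ← h1, ← pow_add]
    exact h12
  have hdvd : 12 ∣ i * 3 + 9 := (hζ.pow_eq_one_iff_dvd _).1 h9
  have hicase : i = 1 ∨ i = 5 ∨ i = 9 := by omega
  rcases hicase with rfl | rfl | rfl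
  · exact absurd (RingEquiv.ext fun x => fix_of_fix_zeta ζ hζ σ (by rw [← hi, pow_one]) x) hσne
  · -- main case : σ ζ = ζ ^ 5
    have hσζ : σ ζ = ζ ^ 5 := hi.symm
    have h24 : ζ ^ 24 = 1 := by
      rw [show (24 : ℕ) = 12 * 2 from rfl, pow_mul, h12, one_pow]
    have hfix : ∀ x, σ (σ x) = x := by
      intro x
      have := fix_of_fix_zeta ζ hζ (σ.trans σ) ?_ x
      · rwa [RingEquiv.trans_apply] at this
      · rw [RingEquiv.trans_apply, hσζ, map_pow, hσζ, ← pow_mul,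
          show (5 * 5 : ℕ) = 24 + 1 from rfl, pow_add, h24, one_mul, pow_one]
    have hσ3 : σ (3 : 𝓞 (CyclotomicField 12 ℚ)) = 3 := map_ofNat σ 3
    have hσn1 : (3 : 𝓞 (CyclotomicField 12 ℚ)) ∣ σ n - 1 := by
      obtain ⟨c, hc⟩ := hn
      exact ⟨σ c, by rw [← map_ofNat σ 3, ← map_mul, ← hc, map_sub, map_one]⟩
    have hsymm : J (σ n) n = J n (σ n) := hrec (σ n) n hσn1 hn
    have hσx : σ (J (σ n) n) = J (σ n) n := by
      rw [hconj (σ n) n, hfix n, ← hsymm]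
    have hx3 : (J (σ n) n) ^ 3 = 1 := hcube (σ n) n
    set x := J (σ n) n with hxdef
    set ω := ζ ^ 4 with hωdef
    have hω3 : ω ^ 3 = 1 := by rw [hωdef, ← pow_mul]; exact h12
    have hω1 : ω ≠ 1 := hζ.pow_ne_one_of_pos_of_lt (by norm_num) (by norm_num)
    have hω0 : ω ≠ 0 := by
      intro h
      rw [h] at hω3
      simp at hω3
    have hσω : σ ω = ω ^ 2 := by
      rw [hωdef, map_pow, hσζ, ← pow_mul, ← pow_mul,
        show (5 * 4 : ℕ) = 12 + 4 * 2 from rfl, pow_add, h12, one_mul]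
    have hcontra : ω ^ 2 ≠ ω := by
      intro h
      have : ω * (ω - 1) = 0 := by rw [mul_sub, mul_one, ← sq, h, sub_self]
      rcases mul_eq_zero.1 this with h' | h'
      · exact hω0 h'
      · exact hω1 (by rwa [sub_eq_zero] at h')
    by_contra hx1
    have hq : x ^ 2 + x + 1 = 0 := by
      have hfac : (x - 1) * (x ^ 2 + x + 1) = 0 := by
        have : (x - 1) * (x ^ 2 + x + 1) = x ^ 3 - 1 := by ring
        rw [this, hx3, sub_self]
      rcases mul_eq_zero.1 hfac with h' | h'
      · exact absurd (by rwa [sub_eq_zero] at h') hx1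
      · exact h'
    have hqω : ω ^ 2 + ω + 1 = 0 := by
      have hfac : (ω - 1) * (ω ^ 2 + ω + 1) = 0 := by
        have : (ω - 1) * (ω ^ 2 + ω + 1) = ω ^ 3 - 1 := by ring
        rw [this, hω3, sub_self]
      rcases mul_eq_zero.1 hfac with h' | h'
      · exact absurd (by rwa [sub_eq_zero] at h') hω1
      · exact h'
    have hfac2 : (x - ω) * (x + ω + 1) = 0 := by
      have : (x - ω) * (x + ω + 1) = (x ^ 2 + x + 1) - (ω ^ 2 + ω + 1) := by ring
      rw [this, hq, hqω, sub_self]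
    rcases mul_eq_zero.1 hfac2 with h' | h'
    · -- x = ω
      have hx : x = ω := by rwa [sub_eq_zero] at h'
      rw [hx, hσω] at hσx
      exact hcontra hσx
    · -- x = -ω - 1 = ω ^ 2
      have hx : x = ω ^ 2 := by
        have : x = -ω - 1 := by linear_combination h'
        rw [this]
        linear_combination -hqω
      rw [hx, map_pow, hσω, ← pow_mul,
        show (2 * 2 : ℕ) = 3 + 1 from rfl, pow_add, hω3, one_mul, pow_one] at hσx
      exact hcontra hσx.symm
  · -- σ ζ = ζ ^ 9 impossible
    exfalso
    have h4 : σ (ζ ^ 4) = 1 := by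
      rw [map_pow, ← hi, ← pow_mul, show (9 * 4 : ℕ) = 12 * 3 from rfl, pow_mul, h12, one_pow]
    have : ζ ^ 4 = 1 := by
      have := congrArg σ.symm h4
      rwa [RingEquiv.symm_apply_apply, map_one] at this
    exact hζ.pow_ne_one_of_pos_of_lt (by norm_num) (by norm_num) this
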